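/- Let p, q ≥ 1 and let c : Fin p → Fin q → ℝ be a real p×q matrix. Then c satisfies the Full-Monge property, i.e. c_{u,v} + c_{u',v'} = c_{u',v} + c_{u,v'} for all u, u', v, v', if and only if for all u, v one has c_{u,v} = (Σ_{v'} c_{u,v'})/q + (Σ_{u'} c_{u',v})/p − (Σ_{u',v'} c_{u',v'})/(p·q). In particular, a probability matrix is Full-Monge if and only if it is the indetermination coupling of its own margins. -/

import Mathlib

/-- A real `p × q` matrix is Full-Monge
(`c_{u,v} + c_{u',v'} = c_{u',v} + c_{u,v'}` for all indices) if and only if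
every entry equals the indetermination expression built from its own margins:
`c_{u,v} = (Σ_{v'} c_{u,v'})/q + (Σ_{u'} c_{u',v})/p − (Σ_{u',v'} c_{u',v'})/(pq)`. -/
theorem fullMonge_iff_indetermination
    (p q : ℕ) (hp : 0 < p) (hq : 0 < q)
    (c : Fin p → Fin q → ℝ) :
    (∀ u u' : Fin p, ∀ v v' : Fin q, c u v + c u' v' = c u' v + c u v')
    ↔ (∀ u v, c u v = (∑ v', c u v') / (q : ℝ) + (∑ u', c u' v) / (p : ℝ)
        - (∑ u', ∑ v', c u' v') / ((p : ℝ) * (q : ℝ))) := by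
  have hp' : (p : ℝ) ≠ 0 := Nat.cast_ne_zero.mpr hp.ne'
  have hq' : (q : ℝ) ≠ 0 := Nat.cast_ne_zero.mpr hq.ne'
  constructor
  · intro h u v
    have key : (p : ℝ) * (q : ℝ) * c u v
        = (q : ℝ) * (∑ u', c u' v) + (p : ℝ) * (∑ v', c u v')
          - ∑ u', ∑ v', c u' v' := by
      have step : ∀ u' v', c u v = c u' v + c u v' - c u' v' := by
        intro u' v'; linarith [h u u' v v']
      calc (p : ℝ) * (q : ℝ) * c u v
          = ∑ u' : Fin p, ∑ v' : Fin q, c u v := by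
            simp [Finset.sum_const, mul_assoc]
        _ = ∑ u' : Fin p, ∑ v' : Fin q, (c u' v + c u v' - c u' v') := by
            refine Finset.sum_congr rfl fun u' _ => Finset.sum_congr rfl fun v' _ => step u' v'
        _ = (q : ℝ) * (∑ u', c u' v) + (p : ℝ) * (∑ v', c u v')
              - ∑ u', ∑ v', c u' v' := by
            simp [Finset.sum_add_distrib, Finset.sum_sub_distrib, Finset.sum_const,
              Finset.mul_sum, mul_comm]
    field_simp
    linear_combination key
  · intro h u u' v v'
    rw [h u v, h u' v', h u' v, h u v']
    ring
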